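/- arXiv:1510.07026 — 7 statements merged into one kernel-verified Lean document; each statement's English description precedes it below -/
import Mathlib

section
/- Let u_min, u_max, y0, α be real numbers with 0 < u_min ≤ u_max and y0 < α. Then (α − y0)/u_min is the greatest element of the set {t ∈ ℝ | t ≥ 0 and there exists an admissible control u with y0 + ∫₀ᵗ u(s) ds = α}; that is, this set contains (α − y0)/u_min, and every element t of the set satisfies t ≤ (α − y0)/u_min. (This value is the deadline of a vehicle's first conflict area under single-integrator dynamics.) -/
/-- An admissible control for speed bounds `0 < umin ≤ umax`: a measurable
function with values in `[umin, umax]` at all nonnegative times. -/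
def Admissible (umin umax : ℝ) (u : ℝ → ℝ) : Prop :=
  Measurable u ∧ ∀ s : ℝ, 0 ≤ s → umin ≤ u s ∧ u s ≤ umax

/-- The deadline `(α - y0)/umin` is the greatest time at which a vehicle
with single-integrator dynamics can reach position `α` from `y0`. -/
theorem deadline_first (umin umax y0 α : ℝ)
    (humin : 0 < umin) (hbound : umin ≤ umax) (hy0 : y0 < α) :
    IsGreatest {t : ℝ | 0 ≤ t ∧ ∃ u : ℝ → ℝ, Admissible umin umax u ∧
        y0 + ∫ s in (0:ℝ)..t, u s = α}
      ((α - y0) / umin) := by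
  constructor
  · refine ⟨div_nonneg (by linarith) humin.le, fun _ => umin, ⟨measurable_const,
      fun s _ => ⟨le_refl _, hbound⟩⟩, ?_⟩
    rw [intervalIntegral.integral_const, smul_eq_mul]
    field_simp
    ring
  · rintro t ⟨ht, u, ⟨hmeas, hb⟩, hint⟩
    have hInt : IntervalIntegrable u MeasureTheory.volume 0 t := by
      rw [intervalIntegrable_iff_integrableOn_Ioc_of_le ht]
      apply MeasureTheory.Measure.integrableOn_of_bounded (M := max |umin| |umax|)
        measure_Ioc_lt_top.ne hmeas.aestronglyMeasurable
      filter_upwards [MeasureTheory.ae_restrict_mem measurableSet_Ioc] with x hx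
      have h := hb x hx.1.le
      rw [Real.norm_eq_abs, abs_le]
      constructor
      · calc -(max |umin| |umax|) ≤ -|umin| := by
              simp [le_max_left]
          _ ≤ umin := neg_abs_le _
          _ ≤ u x := h.1
      · exact h.2.trans ((le_abs_self _).trans (le_max_right _ _))
    have hlow : umin * t ≤ ∫ s in (0:ℝ)..t, u s := by
      have : ∫ s in (0:ℝ)..t, (umin : ℝ) ≤ ∫ s in (0:ℝ)..t, u s := by
        apply intervalIntegral.integral_mono_on ht intervalIntegrable_const hInt
        intro x hx; exact (hb x hx.1).1
      simpa [mul_comm] using this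
    rw [le_div_iff₀ humin]
    nlinarith
end

section
/- Let u_min, u_max, y0, α', α, T' be real numbers with 0 < u_min ≤ u_max, y0 < α' < α, and (α' − y0)/u_max ≤ T' ≤ (α' − y0)/u_min. Then T' + (α − α')/u_min is the greatest element of the set {t ∈ ℝ | there exists an admissible control u with y0 + ∫₀^{T'} u(s) ds = α' and y0 + ∫₀ᵗ u(s) ds = α}. (This is the deadline of a non-first conflict area, given that the preceding area is entered at the scheduled time T', under single-integrator dynamics.) -/
open MeasureTheory


/-- Deadline of a non-first conflict area: given that the preceding area
(at position `α'`) is entered at the scheduled time `T'`, the latest time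
at which the vehicle can reach position `α` is `T' + (α - α')/umin`. -/
theorem deadline_nonfirst (umin umax y0 α' α T' : ℝ)
    (humin : 0 < umin) (hbound : umin ≤ umax)
    (h1 : y0 < α') (h2 : α' < α)
    (hT'l : (α' - y0) / umax ≤ T') (hT'u : T' ≤ (α' - y0) / umin) :
    IsGreatest {t : ℝ | ∃ u : ℝ → ℝ, Admissible umin umax u ∧
        y0 + ∫ s in (0:ℝ)..T', u s = α' ∧
        y0 + ∫ s in (0:ℝ)..t, u s = α}
      (T' + (α - α') / umin) := by
  have humax : 0 < umax := lt_of_lt_of_le humin hbound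
  have hT'pos : 0 < T' := lt_of_lt_of_le (div_pos (by linarith) humax) hT'l
  constructor
  · -- membership
    set v : ℝ := (α' - y0) / T' with hv
    have hvmin : umin ≤ v := by
      rw [hv, le_div_iff₀ hT'pos]
      calc umin * T' = T' * umin := mul_comm _ _
        _ ≤ (α' - y0) / umin * umin := by
            apply mul_le_mul_of_nonneg_right hT'u humin.le
        _ = α' - y0 := by field_simp
    have hvmax : v ≤ umax := by
      rw [hv, div_le_iff₀ hT'pos]
      calc α' - y0 = (α' - y0) / umax * umax := by field_simp
        _ ≤ T' * umax := by apply mul_le_mul_of_nonneg_right hT'l humax.le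
        _ = umax * T' := mul_comm _ _
    refine ⟨fun s => if s ≤ T' then v else umin, ⟨?_, ?_⟩, ?_, ?_⟩
    · exact Measurable.ite (measurableSet_le measurable_id measurable_const)
        measurable_const measurable_const
    · intro s _
      by_cases hs : s ≤ T' <;> simp [hs, hvmin, hvmax, le_refl, hbound]
    · have : (∫ s in (0:ℝ)..T', if s ≤ T' then v else umin) = ∫ s in (0:ℝ)..T', v := by
        apply intervalIntegral.integral_congr_ae
        filter_upwards with s hs
        rw [Set.uIoc_of_le hT'pos.le] at hs
        simp [hs.2]
      rw [this, intervalIntegral.integral_const, smul_eq_mul, hv]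
      field_simp
      ring
    · set t := T' + (α - α') / umin with ht
      have htT' : T' ≤ t := by
        rw [ht]; nlinarith [div_pos (show (0:ℝ) < α - α' by linarith) humin]
      have hi1 : IntervalIntegrable (fun s => if s ≤ T' then v else umin) volume 0 T' := by
        apply (intervalIntegrable_const (c := v)).congr
        intro s hs
        rw [Set.uIoc_of_le hT'pos.le] at hs
        simp [hs.2]
      have hi2 : IntervalIntegrable (fun s => if s ≤ T' then v else umin) volume T' t := by
        apply (intervalIntegrable_const (c := umin)).congr
        intro s hs
        rw [Set.uIoc_of_le htT'] at hs
        simp [not_le.mpr hs.1]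
      rw [← intervalIntegral.integral_add_adjacent_intervals hi1 hi2]
      have e1 : (∫ s in (0:ℝ)..T', if s ≤ T' then v else umin) = α' - y0 := by
        have : (∫ s in (0:ℝ)..T', if s ≤ T' then v else umin) = ∫ s in (0:ℝ)..T', v := by
          apply intervalIntegral.integral_congr_ae
          filter_upwards with s hs
          rw [Set.uIoc_of_le hT'pos.le] at hs
          simp [hs.2]
        rw [this, intervalIntegral.integral_const, smul_eq_mul, hv]
        field_simp
        ring
      have e2 : (∫ s in T'..t, if s ≤ T' then v else umin) = α - α' := by
        have : (∫ s in T'..t, if s ≤ T' then v else umin) = ∫ s in T'..t, umin := by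
          apply intervalIntegral.integral_congr_ae
          filter_upwards with s hs
          rw [Set.uIoc_of_le htT'] at hs
          simp [not_le.mpr hs.1]
        rw [this, intervalIntegral.integral_const, smul_eq_mul, ht]
        field_simp
        ring
      rw [e1, e2]; ring
  · -- upper bound
    rintro t ⟨u, ⟨hmeas, hbd⟩, hT', ht⟩
    by_cases hcase : t ≤ T'
    · have : 0 < (α - α') / umin := div_pos (by linarith) humin
      linarith
    push_neg at hcase
    have hInt : IntervalIntegrable u volume 0 t := by
      by_contra h
      rw [intervalIntegral.integral_undef h] at ht
      linarith
    have h0t : (0:ℝ) ≤ t := le_trans hT'pos.le hcase.le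
    have hi1 : IntervalIntegrable u volume 0 T' :=
      hInt.mono_set (by
        rw [Set.uIcc_of_le hT'pos.le, Set.uIcc_of_le h0t]
        exact Set.Icc_subset_Icc le_rfl hcase.le)
    have hi2 : IntervalIntegrable u volume T' t :=
      hInt.mono_set (by
        rw [Set.uIcc_of_le hcase.le, Set.uIcc_of_le h0t]
        exact Set.Icc_subset_Icc hT'pos.le le_rfl)
    have hsplit := intervalIntegral.integral_add_adjacent_intervals hi1 hi2
    have hmid : (∫ s in T'..t, u s) = α - α' := by
      have h1 : (∫ s in (0:ℝ)..T', u s) = α' - y0 := by linarith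
      have h2 : (∫ s in (0:ℝ)..t, u s) = α - y0 := by linarith
      rw [h1, h2] at hsplit; linarith
    have hlow : (t - T') * umin ≤ ∫ s in T'..t, u s := by
      have := intervalIntegral.integral_mono_on hcase.le
        (intervalIntegrable_const (c := umin)) hi2
        (fun s hs => (hbd s (le_trans hT'pos.le hs.1)).1)
      rw [intervalIntegral.integral_const, smul_eq_mul] at this
      linarith
    rw [hmid] at hlow
    have : t - T' ≤ (α - α') / umin := by
      rw [le_div_iff₀ humin]; linarith
    linarith
end

section
/- Let y, y' : ℝ → ℝ be continuous and strictly increasing on [0, ∞), and let α < β, α' < β' be real numbers. Let T, P, T', P' ≥ 0 satisfy y(T) = α, y(P) = β, y'(T') = α', and y'(P') = β'. Suppose the two trajectories never collide at the conflict area, i.e., for every t ≥ 0 it is not the case that both α < y(t) < β and α' < y'(t) < β'. If T ≤ T', then P ≤ T'. (Collision-freedom forces the first vehicle to exit the conflict area before the second vehicle enters it.) -/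
/-- If two continuous, strictly increasing trajectories never simultaneously
lie strictly inside the conflict area, and the first vehicle enters no later
than the second (`T ≤ T'`), then the first vehicle exits before the second
enters (`P ≤ T'`). -/
theorem exit_before_entry_of_no_collision (y y' : ℝ → ℝ)
    (hyc : ContinuousOn y (Set.Ici (0:ℝ)))
    (hym : StrictMonoOn y (Set.Ici (0:ℝ)))
    (hy'c : ContinuousOn y' (Set.Ici (0:ℝ)))
    (hy'm : StrictMonoOn y' (Set.Ici (0:ℝ)))
    (α β α' β' : ℝ) (hαβ : α < β) (hα'β' : α' < β')
    (T P T' P' : ℝ) (hT : 0 ≤ T) (hP : 0 ≤ P) (hT' : 0 ≤ T') (hP' : 0 ≤ P')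
    (hyT : y T = α) (hyP : y P = β) (hy'T' : y' T' = α') (hy'P' : y' P' = β')
    (hsafe : ∀ t : ℝ, 0 ≤ t →
      ¬ ((α < y t ∧ y t < β) ∧ (α' < y' t ∧ y' t < β')))
    (hTT' : T ≤ T') : P ≤ T' := by
  by_contra h
  push_neg at h
  have hT'P' : T' < P' := by
    by_contra hc
    push_neg at hc
    have := hy'm.monotoneOn hP' hT' hc
    rw [hy'T', hy'P'] at this
    linarith
  set t := (T' + min P P') / 2 with ht
  have hlt : T' < min P P' := lt_min h hT'P'
  have htT' : T' < t := by
    have := min_le_left P P'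
    simp only [ht]; linarith
  have ht0 : 0 ≤ t := le_of_lt (lt_of_le_of_lt hT' htT')
  have htP : t < P := by
    have := min_le_left P P'
    simp only [ht]; linarith
  have htP' : t < P' := by
    have := min_le_right P P'
    simp only [ht]; linarith
  refine hsafe t ht0 ⟨⟨?_, ?_⟩, ?_, ?_⟩
  · rw [← hyT]; exact hym hT ht0 (lt_of_le_of_lt hTT' htT')
  · rw [← hyP]; exact hym ht0 hP htP
  · rw [← hy'T']; exact hy'm hT' ht0 htT'
  · rw [← hy'P']; exact hy'm ht0 hP' htP'
end

section
/- Let y, y' : ℝ → ℝ be strictly increasing on [0, ∞), and let α < β, α' < β' be real numbers. Let T, P, T' ≥ 0 satisfy y(P) = β and y'(T') = α'. If P ≤ T', then for every t ≥ 0 it is not the case that both α < y(t) < β and α' < y'(t) < β'. (If one vehicle exits the conflict area before the other enters it, no collision occurs at that conflict area.) -/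
/-- If the first vehicle exits the conflict area before the second one enters
it (`P ≤ T'`), then at no time are both vehicles strictly inside the conflict
area: no collision occurs there. -/
theorem no_collision_of_exit_before_entry (y y' : ℝ → ℝ)
    (hym : StrictMonoOn y (Set.Ici (0:ℝ)))
    (hy'm : StrictMonoOn y' (Set.Ici (0:ℝ)))
    (α β α' β' : ℝ) (hαβ : α < β) (hα'β' : α' < β')
    (T P T' : ℝ) (hT : 0 ≤ T) (hP : 0 ≤ P) (hT' : 0 ≤ T')
    (hyP : y P = β) (hy'T' : y' T' = α')
    (hPT' : P ≤ T') :
    ∀ t : ℝ, 0 ≤ t →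
      ¬ ((α < y t ∧ y t < β) ∧ (α' < y' t ∧ y' t < β')) := by
  rintro t ht ⟨⟨_, h1⟩, ⟨h2, _⟩⟩
  have htP : t < P := by
    by_contra h
    push_neg at h
    rcases eq_or_lt_of_le h with h | h
    · rw [← h, hyP] at h1; exact lt_irrefl _ h1
    · exact absurd (hym hP ht h) (by rw [hyP]; exact not_lt.2 h1.le)
  have hT't : T' < t := by
    by_contra h
    push_neg at h
    rcases eq_or_lt_of_le h with h | h
    · rw [h, hy'T'] at h2; exact lt_irrefl _ h2
    · exact absurd (hy'm ht hT' h) (by rw [hy'T']; exact not_lt.2 h2.le)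
  linarith
end

section
/- (Lemma 1, single-integrator form.) Let u_min, u_max, y0 be real numbers with 0 < u_min ≤ u_max, let d ≥ 1, let α : Fin d → ℝ be strictly increasing with y0 < α(0), and let T : Fin d → ℝ satisfy (α(0) − y0)/u_max ≤ T(0) ≤ (α(0) − y0)/u_min and, for every index k with k + 1 < d, (α(k+1) − α(k))/u_max ≤ T(k+1) − T(k) ≤ (α(k+1) − α(k))/u_min. Then there exists a single admissible control u such that y0 + ∫₀^{T(k)} u(s) ds = α(k) for every k. (A schedule of entry times satisfying all release-time and deadline constraints along a vehicle's route is realizable by one admissible input signal.) -/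
open MeasureTheory


/-- Lemma 1 (single-integrator form): a schedule of entry times satisfying all
release-time and deadline constraints along a vehicle's route is realizable by
a single admissible input signal. -/
theorem schedule_realizable (umin umax y0 : ℝ)
    (humin : 0 < umin) (hbound : umin ≤ umax)
    (d : ℕ) (hd : 1 ≤ d)
    (α T : Fin d → ℝ) (hα : StrictMono α)
    (hy0 : y0 < α ⟨0, hd⟩)
    (hT0l : (α ⟨0, hd⟩ - y0) / umax ≤ T ⟨0, hd⟩)
    (hT0u : T ⟨0, hd⟩ ≤ (α ⟨0, hd⟩ - y0) / umin)
    (hstep : ∀ k : ℕ, ∀ hk : k + 1 < d,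
      (α ⟨k + 1, hk⟩ - α ⟨k, Nat.lt_of_succ_lt hk⟩) / umax
          ≤ T ⟨k + 1, hk⟩ - T ⟨k, Nat.lt_of_succ_lt hk⟩ ∧
        T ⟨k + 1, hk⟩ - T ⟨k, Nat.lt_of_succ_lt hk⟩
          ≤ (α ⟨k + 1, hk⟩ - α ⟨k, Nat.lt_of_succ_lt hk⟩) / umin) :
    ∃ u : ℝ → ℝ, Admissible umin umax u ∧
      ∀ k : Fin d, y0 + ∫ s in (0:ℝ)..T k, u s = α k := by
  have humax : 0 < umax := lt_of_lt_of_le humin hbound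
  have hΔα : ∀ k (hk : k + 1 < d), 0 < α ⟨k+1, hk⟩ - α ⟨k, Nat.lt_of_succ_lt hk⟩ := by
    intro k hk
    have := hα (show (⟨k, Nat.lt_of_succ_lt hk⟩ : Fin d) < ⟨k+1, hk⟩ from by
      simp [Fin.lt_def])
    linarith
  have hΔT : ∀ k (hk : k + 1 < d), 0 < T ⟨k+1, hk⟩ - T ⟨k, Nat.lt_of_succ_lt hk⟩ := by
    intro k hk
    have h1 := (hstep k hk).1
    have := div_pos (hΔα k hk) humax
    linarith
  have hα0 : 0 < α ⟨0, hd⟩ - y0 := by linarith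
  have hT0 : 0 < T ⟨0, hd⟩ := by
    have := div_pos hα0 humax
    linarith
  have hTsm : StrictMono T := by
    obtain ⟨m, rfl⟩ : ∃ m, d = m + 1 := ⟨d - 1, by omega⟩
    rw [Fin.strictMono_iff_lt_succ]
    intro i
    have := hΔT i.1 (by omega : i.1 + 1 < m + 1)
    have h1 : (Fin.castSucc i) = (⟨i.1, by omega⟩ : Fin (m+1)) := rfl
    have h2 : i.succ = (⟨i.1 + 1, by omega⟩ : Fin (m+1)) := rfl
    rw [h1, h2]; linarith
  -- piecewise-constant speeds
  set w : ℕ → ℝ := fun n =>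
    if h0 : n = 0 then (α ⟨0, hd⟩ - y0) / T ⟨0, hd⟩
    else if h2 : n < d then
      (α ⟨n, h2⟩ - α ⟨n - 1, by omega⟩) / (T ⟨n, h2⟩ - T ⟨n - 1, by omega⟩)
    else umin with hw_def
  have hw : ∀ n, umin ≤ w n ∧ w n ≤ umax := by
    intro n
    rcases n with _ | k
    · simp only [hw_def, dif_pos]
      constructor
      · rw [le_div_iff₀ hT0]
        have := (le_div_iff₀ humin).mp hT0u
        linarith
      · rw [div_le_iff₀ hT0]
        have := (div_le_iff₀ humax).mp hT0l
        linarith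
    · by_cases h2 : k + 1 < d
      · have hΔα' := hΔα k h2
        have hΔT' := hΔT k h2
        have hs := hstep k h2
        simp only [hw_def, dif_neg (Nat.succ_ne_zero k), dif_pos h2, Nat.add_sub_cancel]
        constructor
        · rw [le_div_iff₀ hΔT']
          have := (le_div_iff₀ humin).mp hs.2
          linarith
        · rw [div_le_iff₀ hΔT']
          have := (div_le_iff₀ humax).mp hs.1
          linarith
      · simp only [hw_def, dif_neg (Nat.succ_ne_zero k), dif_neg h2]
        exact ⟨le_refl _, hbound⟩
  -- the index function and the control
  set N : ℝ → ℕ := fun s => (Finset.univ.filter fun k : Fin d => T k ≤ s).card with hN_def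
  set u : ℝ → ℝ := fun s => w (N s) with hu_def
  have hNmeas : Measurable N := by
    have : N = fun s => ∑ k : Fin d, if T k ≤ s then 1 else 0 := by
      funext s; exact Finset.card_filter _ _
    rw [this]
    exact Finset.measurable_sum _ fun k _ =>
      Measurable.ite measurableSet_Ici measurable_const
        measurable_const
  have humeas : Measurable u := by
    have : Measurable (w ∘ N) := measurable_from_top.comp hNmeas
    exact this
  have hubound : ∀ s, umin ≤ u s ∧ u s ≤ umax := fun s => hw (N s)
  -- integrability
  have hInt : ∀ a b : ℝ, IntervalIntegrable u volume a b := by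
    intro a b
    refine (intervalIntegrable_const (c := umax)).mono_fun'
      humeas.aestronglyMeasurable ?_
    filter_upwards with x
    have h := hubound x
    rw [Real.norm_eq_abs, abs_of_pos (lt_of_lt_of_le humin h.1)]
    exact h.2
  -- index computations
  have hN0 : ∀ s : ℝ, s < T ⟨0, hd⟩ → N s = 0 := by
    intro s hs
    simp only [hN_def, Finset.card_eq_zero, Finset.filter_eq_empty_iff]
    intro j _
    have : T ⟨0, hd⟩ ≤ T j := hTsm.monotone (by simp [Fin.le_def])
    push_neg
    linarith
  have hNk : ∀ k (hk : k + 1 < d) (s : ℝ),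
      T ⟨k, Nat.lt_of_succ_lt hk⟩ ≤ s → s < T ⟨k+1, hk⟩ → N s = k + 1 := by
    intro k hk s hs1 hs2
    have : (Finset.univ.filter fun j : Fin d => T j ≤ s)
        = Finset.Iic (⟨k, Nat.lt_of_succ_lt hk⟩ : Fin d) := by
      ext j
      simp only [Finset.mem_filter, Finset.mem_univ, true_and, Finset.mem_Iic]
      constructor
      · intro hj
        by_contra hc
        have hj2 : (⟨k+1, hk⟩ : Fin d) ≤ j := by
          simp only [Fin.le_def] at hc ⊢; omega
        have := hTsm.monotone hj2
        linarith
      · intro hj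
        have := hTsm.monotone hj
        linarith
    simp only [hN_def, this, Fin.card_Iic]
  -- integral over the first segment
  have seg0 : ∫ s in (0:ℝ)..T ⟨0, hd⟩, u s = α ⟨0, hd⟩ - y0 := by
    have hae : ∀ᵐ x : ℝ, x ∈ Set.uIoc (0:ℝ) (T ⟨0, hd⟩) → u x = w 0 := by
      have hne : ∀ᵐ x : ℝ, x ≠ T ⟨0, hd⟩ := by
        rw [ae_iff]
        simpa using Real.volume_singleton
      filter_upwards [hne] with x hx hmem
      rw [Set.uIoc_of_le hT0.le] at hmem
      have hlt : x < T ⟨0, hd⟩ := lt_of_le_of_ne hmem.2 hx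
      simp [hu_def, hN0 x hlt]
    rw [intervalIntegral.integral_congr_ae hae, intervalIntegral.integral_const]
    simp only [hw_def, dif_pos rfl, smul_eq_mul, sub_zero]
    field_simp
  -- integral over later segments
  have segk : ∀ k (hk : k + 1 < d),
      ∫ s in T ⟨k, Nat.lt_of_succ_lt hk⟩..T ⟨k+1, hk⟩, u s
        = α ⟨k+1, hk⟩ - α ⟨k, Nat.lt_of_succ_lt hk⟩ := by
    intro k hk
    have hΔT' := hΔT k hk
    have hae : ∀ᵐ x : ℝ,
        x ∈ Set.uIoc (T ⟨k, Nat.lt_of_succ_lt hk⟩) (T ⟨k+1, hk⟩) → u x = w (k+1) := by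
      have hne : ∀ᵐ x : ℝ, x ≠ T ⟨k+1, hk⟩ := by
        rw [ae_iff]
        simpa using Real.volume_singleton
      filter_upwards [hne] with x hx hmem
      rw [Set.uIoc_of_le (by linarith)] at hmem
      have hlt : x < T ⟨k+1, hk⟩ := lt_of_le_of_ne hmem.2 hx
      simp [hu_def, hNk k hk x hmem.1.le hlt]
    rw [intervalIntegral.integral_congr_ae hae, intervalIntegral.integral_const]
    simp only [hw_def, dif_neg (Nat.succ_ne_zero k), dif_pos hk, Nat.add_sub_cancel,
      smul_eq_mul]
    field_simp
  -- main induction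
  have key : ∀ k (hk : k < d), ∫ s in (0:ℝ)..T ⟨k, hk⟩, u s = α ⟨k, hk⟩ - y0 := by
    intro k
    induction k with
    | zero => intro hk; exact seg0
    | succ k ih =>
      intro hk
      have hk' : k < d := Nat.lt_of_succ_lt hk
      have := intervalIntegral.integral_add_adjacent_intervals (hInt 0 (T ⟨k, hk'⟩))
        (hInt (T ⟨k, hk'⟩) (T ⟨k+1, hk⟩))
      rw [← this, ih hk', segk k hk]
      ring
  refine ⟨u, ⟨humeas, fun s _ => hubound s⟩, ?_⟩
  intro k
  have := key k.1 k.2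
  rw [show (⟨k.1, k.2⟩ : Fin d) = k from rfl] at this
  linarith
end

section
/- (Waypoint interpolation for single-integrator dynamics.) Let u_min, u_max, y0 be real numbers with 0 < u_min ≤ u_max, let N ≥ 0, let t : Fin (N+1) → ℝ be monotone nondecreasing with t(0) = 0, and let z : Fin (N+1) → ℝ with z(0) = y0 such that for every index k with k + 1 ≤ N, u_min · (t(k+1) − t(k)) ≤ z(k+1) − z(k) ≤ u_max · (t(k+1) − t(k)). Then there exists an admissible control u such that y0 + ∫₀^{t(k)} u(s) ds = z(k) for every k. -/
/-- Waypoint interpolation for single-integrator dynamics: if consecutive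
time–position waypoints are compatible with the speed bounds, then there is a
single admissible control whose trajectory passes through all waypoints. -/
theorem waypoint_interpolation (umin umax y0 : ℝ)
    (humin : 0 < umin) (hbound : umin ≤ umax)
    (N : ℕ) (t z : Fin (N + 1) → ℝ)
    (hmono : Monotone t) (ht0 : t 0 = 0) (hz0 : z 0 = y0)
    (hstep : ∀ k : ℕ, ∀ hk : k + 1 ≤ N,
      umin * (t ⟨k + 1, Nat.succ_lt_succ hk⟩ - t ⟨k, Nat.lt_succ_of_le (Nat.le_of_succ_le hk)⟩)
          ≤ z ⟨k + 1, Nat.succ_lt_succ hk⟩ - z ⟨k, Nat.lt_succ_of_le (Nat.le_of_succ_le hk)⟩ ∧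
        z ⟨k + 1, Nat.succ_lt_succ hk⟩ - z ⟨k, Nat.lt_succ_of_le (Nat.le_of_succ_le hk)⟩
          ≤ umax * (t ⟨k + 1, Nat.succ_lt_succ hk⟩ - t ⟨k, Nat.lt_succ_of_le (Nat.le_of_succ_le hk)⟩)) :
    ∃ u : ℝ → ℝ, Admissible umin umax u ∧
      ∀ k : Fin (N + 1), y0 + ∫ s in (0:ℝ)..t k, u s = z k := by
  classical
  set c : Fin N → ℝ := fun k =>
    (z k.succ - z k.castSucc) / (t k.succ - t k.castSucc) with hc
  set u : ℝ → ℝ := fun s =>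
    umin + ∑ k : Fin N, Set.indicator (Set.Ico (t k.castSucc) (t k.succ))
      (fun _ => c k - umin) s with hu
  have hΔ : ∀ k : Fin N,
      umin * (t k.succ - t k.castSucc) ≤ z k.succ - z k.castSucc ∧
      z k.succ - z k.castSucc ≤ umax * (t k.succ - t k.castSucc) := by
    intro k
    exact hstep k.1 k.2
  have hΔt : ∀ k : Fin N, 0 ≤ t k.succ - t k.castSucc := by
    intro k
    have := hmono (Fin.castSucc_le_succ k)
    linarith
  -- disjointness
  have hdisj : ∀ (i j : Fin N) (s : ℝ), i ≠ j →
      s ∈ Set.Ico (t j.castSucc) (t j.succ) → s ∉ Set.Ico (t i.castSucc) (t i.succ) := by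
    intro i j s hij hs hsi
    rcases lt_or_gt_of_ne hij with h | h
    · have h1 : t i.succ ≤ t j.castSucc := hmono (by
        simp [Fin.le_def]
        omega)
      have := hsi.2
      have := hs.1
      linarith
    · have h1 : t j.succ ≤ t i.castSucc := hmono (by
        simp [Fin.le_def]
        omega)
      have := hs.2
      have := hsi.1
      linarith
  have hmem : ∀ (j : Fin N) (s : ℝ), s ∈ Set.Ico (t j.castSucc) (t j.succ) → u s = c j := by
    intro j s hs
    have hsum : ∑ k : Fin N, Set.indicator (Set.Ico (t k.castSucc) (t k.succ))
        (fun _ => c k - umin) s = c j - umin := by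
      rw [Finset.sum_eq_single_of_mem j (Finset.mem_univ j)]
      · rw [Set.indicator_of_mem hs]
      · intro i _ hij
        rw [Set.indicator_of_notMem (hdisj i j s hij hs)]
    simp only [hu, hsum]
    ring
  have hnot : ∀ s : ℝ, (∀ j : Fin N, s ∉ Set.Ico (t j.castSucc) (t j.succ)) → u s = umin := by
    intro s hs
    simp only [hu]
    rw [Finset.sum_eq_zero]
    · ring
    · intro i _
      rw [Set.indicator_of_notMem (hs i)]
  have hcb : ∀ j : Fin N, t j.castSucc < t j.succ → umin ≤ c j ∧ c j ≤ umax := by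
    intro j hj
    have hpos : 0 < t j.succ - t j.castSucc := by linarith
    obtain ⟨h1, h2⟩ := hΔ j
    constructor
    · rw [hc, le_div_iff₀ hpos]
      linarith [h1]
    · rw [hc, div_le_iff₀ hpos]
      linarith [h2]
  have hub : ∀ s : ℝ, umin ≤ u s ∧ u s ≤ umax := by
    intro s
    by_cases h : ∃ j : Fin N, s ∈ Set.Ico (t j.castSucc) (t j.succ)
    · obtain ⟨j, hj⟩ := h
      rw [hmem j s hj]
      exact hcb j (lt_of_le_of_lt hj.1 hj.2)
    · push_neg at h
      rw [hnot s h]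
      exact ⟨le_refl _, hbound⟩
  have humeas : Measurable u := by
    apply Measurable.add measurable_const
    apply Finset.measurable_sum
    intro k _
    exact (measurable_const.indicator measurableSet_Ico)
  have hInt : ∀ a b : ℝ, IntervalIntegrable u MeasureTheory.volume a b := by
    intro a b
    rw [intervalIntegrable_iff]
    apply MeasureTheory.Integrable.mono'
      ((MeasureTheory.integrableOn_const_iff (C := umax)).mpr (Or.inr measure_Ioc_lt_top))
      humeas.aestronglyMeasurable.restrict
    filter_upwards with s
    have := hub s
    rw [Real.norm_eq_abs, abs_le]
    constructor <;> linarith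
  have hseg : ∀ j : Fin N,
      ∫ s in t j.castSucc..t j.succ, u s = z j.succ - z j.castSucc := by
    intro j
    by_cases h : t j.castSucc < t j.succ
    · have hb : ∀ᵐ s : ℝ, s ≠ t j.succ := by
        rw [MeasureTheory.ae_iff]
        simp only [ne_eq, not_not]
        have : {s : ℝ | s = t j.succ} = {t j.succ} := by
          ext x; simp
        rw [this]
        exact MeasureTheory.measure_singleton _
      rw [intervalIntegral.integral_congr_ae (g := fun _ => c j) ?_,
        intervalIntegral.integral_const]
      · rw [smul_eq_mul, hc, mul_div_cancel₀]
        linarith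
      · filter_upwards [hb] with s hs hsI
        rw [Set.uIoc_of_le h.le] at hsI
        have : s ∈ Set.Ico (t j.castSucc) (t j.succ) :=
          ⟨hsI.1.le, lt_of_le_of_ne hsI.2 hs⟩
        exact hmem j s this
    · have heq : t j.castSucc = t j.succ := le_antisymm (by linarith [hΔt j]) (not_lt.mp h)
      have hz : z j.succ - z j.castSucc = 0 := by
        obtain ⟨h1, h2⟩ := hΔ j
        rw [← heq] at h1 h2
        simp at h1 h2
        linarith
      rw [heq, intervalIntegral.integral_same, hz]
  refine ⟨u, ⟨humeas, fun s _ => hub s⟩, ?_⟩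
  intro k
  induction k using Fin.induction with
  | zero => rw [ht0, intervalIntegral.integral_same, hz0]; ring
  | succ i ih =>
    have hadd := intervalIntegral.integral_add_adjacent_intervals
      (hInt 0 (t i.castSucc)) (hInt (t i.castSucc) (t i.succ))
    rw [← hadd, hseg i]
    linarith [ih]
end

section
/- (Equivalence of the safety verification problem and the mixed-integer feasibility problem for single-integrator dynamics.) Consider n vehicles indexed by j ∈ Fin n and m conflict areas indexed by i ∈ Fin m. Let Use(i, j) be a predicate meaning vehicle j's path crosses conflict area i; for each pair with Use(i, j), let α(i,j) < β(i,j) be the entry and exit positions of area i on j's path. For each j let 0 < u_min(j) ≤ u_max(j) be speed bounds and y0(j) an initial position with y0(j) < α(i,j) for every i used by j. Assume that for each j and any two distinct areas i, i' used by j, either β(i,j) ≤ α(i',j) or β(i',j) ≤ α(i,j) (areas along one path do not overlap). Say that area i is first on j's route if Use(i,j) and α(i,j) ≤ α(i'',j) for every i'' used by j, and that i' immediately precedes i on j's route if both are used by j, α(i',j) < α(i,j), and no i'' used by j has α(i',j) < α(i'',j) < α(i,j). Then the following are equivalent: (i) there exist admissible controls u_j (one per vehicle, with bounds u_min(j), u_max(j))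 such that, writing y_j(t) = y0(j) + ∫₀ᵗ u_j, for every t ≥ 0, every area i, and every pair of distinct vehicles j ≠ j' with Use(i,j) and Use(i,j'), it is not the case that both α(i,j) < y_j(t) < β(i,j) and α(i,j') < y_{j'}(t) < β(i,j'); (ii) there exist real numbers T(i,j) and p(i,j), defined for all pairs with Use(i,j), such that: (A) for the first area i on j's route, (α(i,j) − y0(j))/u_max(j) ≤ T(i,j) ≤ (α(i,j) − y0(j))/u_min(j); (B) whenever i' immediately precedes i on j's route, T(i',j) + p(i',j) + (α(i,j) − β(i',j))/u_max(j) ≤ T(i,j) ≤ T(i',j) + p(i',j) + (α(i,j) − β(i',j))/u_min(j); (C) for every used pair, (β(i,j) − α(i,j))/u_max(j) ≤ p(i,j) ≤ (β(i,j) − α(i,j))/u_min(j); (D) for every area i and distinct vehicles j ≠ j' with Use(i,j) and Use(i,j'), either T(i,j) + p(i,j) ≤ T(i,j') or T(i,j') + p(i,j') ≤ T(i,j). -/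
open MeasureTheory Set intervalIntegral

namespace VerifMilp

lemma adm_intInt {umin umax : ℝ} {u : ℝ → ℝ} (hu : Admissible umin umax u)
    {c d : ℝ} (hc : 0 ≤ c) (hcd : c ≤ d) : IntervalIntegrable u volume c d := by
  rw [intervalIntegrable_iff, uIoc_of_le hcd]
  refine ⟨hu.1.aestronglyMeasurable.restrict, ?_⟩
  refine HasFiniteIntegral.of_bounded (C := max |umin| |umax|) ?_
  refine (ae_restrict_iff' measurableSet_Ioc).2 (ae_of_all _ fun x hx => ?_)
  have hx0 : 0 ≤ x := le_trans hc (le_of_lt hx.1)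
  obtain ⟨h1, h2⟩ := hu.2 x hx0
  rw [Real.norm_eq_abs, abs_le]
  constructor
  · have := neg_abs_le umin; have := le_max_left |umin| |umax|; linarith
  · have := le_abs_self umax; have := le_max_right |umin| |umax|; linarith

lemma adm_bounds {umin umax : ℝ} {u : ℝ → ℝ} (hu : Admissible umin umax u)
    {c d : ℝ} (hc : 0 ≤ c) (hcd : c ≤ d) :
    umin * (d - c) ≤ ∫ s in c..d, u s ∧ (∫ s in c..d, u s) ≤ umax * (d - c) := by
  have hint := adm_intInt hu hc hcd
  constructor
  · have h := intervalIntegral.integral_mono_on (μ := volume) hcd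
      (intervalIntegrable_const (c := umin)) hint
      (fun x hx => (hu.2 x (le_trans hc hx.1)).1)
    rw [intervalIntegral.integral_const, smul_eq_mul] at h
    linarith [h]
  · have h := intervalIntegral.integral_mono_on (μ := volume) hcd hint
      (intervalIntegrable_const (c := umax))
      (fun x hx => (hu.2 x (le_trans hc hx.1)).2)
    rw [intervalIntegral.integral_const, smul_eq_mul] at h
    linarith [h]

/-- Two-sided bound on trajectory increments. -/
lemma traj_bounds {umin umax : ℝ} {u : ℝ → ℝ} (hu : Admissible umin umax u)
    (y0 : ℝ) {c d : ℝ} (hc : 0 ≤ c) (hcd : c ≤ d) :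
    umin * (d - c) ≤ (y0 + ∫ s in (0:ℝ)..d, u s) - (y0 + ∫ s in (0:ℝ)..c, u s) ∧
    (y0 + ∫ s in (0:ℝ)..d, u s) - (y0 + ∫ s in (0:ℝ)..c, u s) ≤ umax * (d - c) := by
  have h1 := adm_intInt hu le_rfl hc
  have h2 := adm_intInt hu le_rfl (hc.trans hcd)
  have h3 := intervalIntegral.integral_interval_sub_left h2 h1
  have h4 := adm_bounds hu hc hcd
  constructor <;> [skip; skip] <;>
  · rw [show (y0 + ∫ s in (0:ℝ)..d, u s) - (y0 + ∫ s in (0:ℝ)..c, u s)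
        = (∫ s in (0:ℝ)..d, u s) - ∫ s in (0:ℝ)..c, u s by ring, h3]
    first
      | exact h4.1
      | exact h4.2

lemma exists_hit {umin umax : ℝ} {u : ℝ → ℝ} (hu : Admissible umin umax u)
    (h0 : 0 < umin) {y0 c : ℝ} (hc : y0 < c) :
    ∃ t : ℝ, 0 ≤ t ∧ y0 + ∫ s in (0:ℝ)..t, u s = c := by
  set Y : ℝ → ℝ := fun t => y0 + ∫ s in (0:ℝ)..t, u s with hY
  have hY0 : Y 0 = y0 := by simp [hY]
  set tstar : ℝ := (c - y0) / umin with hts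
  have hts0 : 0 ≤ tstar := le_of_lt (div_pos (by linarith) h0)
  have hYt : c ≤ Y tstar := by
    have h := (traj_bounds hu y0 le_rfl hts0).1
    simp only [intervalIntegral.integral_same, add_zero, sub_zero] at h
    have h2 : umin * tstar = c - y0 := by
      rw [hts, mul_div_cancel₀ _ (ne_of_gt h0)]
    show c ≤ y0 + ∫ s in (0:ℝ)..tstar, u s
    linarith
  have hcont : ContinuousOn Y (Icc 0 tstar) := by
    have hint : IntegrableOn u (uIcc 0 tstar) volume := by
      rw [uIcc_of_le hts0]
      refine ⟨hu.1.aestronglyMeasurable.restrict, ?_⟩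
      refine HasFiniteIntegral.of_bounded (C := max |umin| |umax|) ?_
      refine (ae_restrict_iff' measurableSet_Icc).2 (ae_of_all _ fun x hx => ?_)
      obtain ⟨h1, h2⟩ := hu.2 x hx.1
      rw [Real.norm_eq_abs, abs_le]
      constructor
      · have := neg_abs_le umin; have := le_max_left |umin| |umax|; linarith
      · have := le_abs_self umax; have := le_max_right |umin| |umax|; linarith
    have hco := (intervalIntegral.continuousOn_primitive_interval hint).add
      (continuousOn_const (c := y0))
    rw [uIcc_of_le hts0] at hco
    exact fun x hx => by simpa [hY, add_comm, Pi.add_def] using hco x hx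
  have := intermediate_value_Icc hts0 hcont
  have hmem : c ∈ Icc (Y 0) (Y tstar) := ⟨by rw [hY0]; exact le_of_lt hc, hYt⟩
  obtain ⟨t, ht, hval⟩ := this hmem
  exact ⟨t, ht.1, hval⟩



/-- `min`-difference is monotone. -/
lemma min_diff_mono {c d : ℝ} (hcd : c ≤ d) {t1 t2 : ℝ} (h : t1 ≤ t2) :
    min t1 d - min t1 c ≤ min t2 d - min t2 c := by
  rcases le_total t1 c with h1 | h1
  · rw [min_eq_left h1, min_eq_left (h1.trans hcd)]
    have : min t2 c ≤ min t2 d := min_le_min le_rfl hcd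
    linarith
  · rw [min_eq_right h1, min_eq_right (h1.trans h)]
    have : min t1 d ≤ min t2 d := min_le_min h le_rfl
    linarith

/-- Vanishing of a `min`-difference increment when the window is disjoint
from the interval. -/
lemma min_diff_zero {c d t1 t2 : ℝ} (hcd : c ≤ d)
    (h : (d ≤ t1 ∧ t1 ≤ t2) ∨ (t2 ≤ c ∧ t1 ≤ t2)) :
    (min t2 d - min t2 c) - (min t1 d - min t1 c) = 0 := by
  rcases h with ⟨h1, h2⟩ | ⟨h1, h2⟩
  · rw [min_eq_right (h1.trans h2), min_eq_right ((hcd.trans h1).trans h2),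
      min_eq_right h1, min_eq_right (hcd.trans h1)]
    ring
  · rw [min_eq_left (h1.trans hcd), min_eq_left h1,
      min_eq_left ((h2.trans h1).trans hcd), min_eq_left (h2.trans h1)]
    ring

lemma integral_indicator_Ioc {c d : ℝ} (hc : 0 ≤ c) (hcd : c ≤ d) (t : ℝ) :
    (∫ s in (0:ℝ)..t, (Set.Ioc c d).indicator (fun _ => (1:ℝ)) s)
      = min t d - min t c := by
  rcases le_total 0 t with ht | ht
  · rw [intervalIntegral.integral_of_le ht,
      MeasureTheory.setIntegral_indicator measurableSet_Ioc, Set.Ioc_inter_Ioc,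
      MeasureTheory.setIntegral_const, smul_eq_mul, mul_one, Real.volume_real_Ioc,
      sup_eq_right.2 hc]
    rcases le_total t c with h | h
    · rw [min_eq_left (h.trans hcd), min_eq_left h,
        max_eq_right (by have : t ⊓ d ≤ t := inf_le_left; linarith)]
      ring
    · rw [min_eq_right h,
        max_eq_left (by simp only [sub_nonneg, le_inf_iff]; exact ⟨h, hcd⟩)]
  · rw [intervalIntegral.integral_of_ge ht,
      MeasureTheory.setIntegral_indicator measurableSet_Ioc, Set.Ioc_inter_Ioc,
      sup_eq_right.2 (ht.trans hc), Set.Ioc_eq_empty (by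
        have : (0:ℝ) ⊓ d ≤ 0 := inf_le_left; linarith),
      MeasureTheory.setIntegral_empty, neg_zero,
      min_eq_left (ht.trans hc), min_eq_left (ht.trans (hc.trans hcd))]
    ring

lemma intInt_indicator_Ioc (c d t : ℝ) :
    IntervalIntegrable ((Set.Ioc c d).indicator (fun _ => (1:ℝ))) volume 0 t := by
  rw [intervalIntegrable_iff]
  refine MeasureTheory.Integrable.indicator ?_ measurableSet_Ioc
  exact (integrableOn_const (by
    rw [Set.uIoc]; exact measure_Ioc_lt_top.ne))



lemma exists_control {m : ℕ} (U : Finset (Fin m)) (a b T P : Fin m → ℝ)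
    {umin umax : ℝ} (y0 : ℝ) (h0 : 0 < umin) (h1 : umin ≤ umax)
    (hab : ∀ i ∈ U, a i < b i) (hy0 : ∀ i ∈ U, y0 < a i)
    (hsep : ∀ i ∈ U, ∀ k ∈ U, i ≠ k → b i ≤ a k ∨ b k ≤ a i)
    (hA : ∀ i ∈ U, (∀ k ∈ U, a i ≤ a k) →
      (a i - y0) / umax ≤ T i ∧ T i ≤ (a i - y0) / umin)
    (hB : ∀ i ∈ U, ∀ i' ∈ U, a i' < a i →
      (∀ k ∈ U, ¬ (a i' < a k ∧ a k < a i)) →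
      T i' + P i' + (a i - b i') / umax ≤ T i ∧ T i ≤ T i' + P i' + (a i - b i') / umin)
    (hC : ∀ i ∈ U, (b i - a i) / umax ≤ P i ∧ P i ≤ (b i - a i) / umin) :
    ∃ u : ℝ → ℝ, Admissible umin umax u ∧
      (∀ t1 t2 : ℝ, t1 ≤ t2 →
        y0 + ∫ s in (0:ℝ)..t1, u s ≤ y0 + ∫ s in (0:ℝ)..t2, u s) ∧
      ∀ i ∈ U, (y0 + ∫ s in (0:ℝ)..(T i), u s) = a i ∧
        (y0 + ∫ s in (0:ℝ)..(T i + P i), u s) = b i := by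
  classical
  have humax : 0 < umax := lt_of_lt_of_le h0 h1
  -- distinct entries
  have hane : ∀ i ∈ U, ∀ k ∈ U, i ≠ k → a i ≠ a k := by
    intro i hi k hk hik heq
    rcases hsep i hi k hk hik with h | h
    · have := hab i hi; rw [heq] at this; linarith
    · have := hab k hk; rw [heq] at h; linarith
  -- set of predecessors
  set D : Fin m → Finset (Fin m) := fun i => U.filter (fun k => a k < a i) with hD
  have hmemD : ∀ i k, k ∈ D i ↔ (k ∈ U ∧ a k < a i) := by
    intro i k; simp [hD, Finset.mem_filter]
  -- entry data (previous exit time `e i` and previous exit position `q i`)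
  have hexist : ∀ i : Fin m, ∃ eq : ℝ × ℝ,
      ((D i).Nonempty → ∃ i', i' ∈ D i ∧ (∀ l ∈ D i, a l ≤ a i') ∧
        eq.1 = T i' + P i' ∧ eq.2 = b i') ∧
      (¬ (D i).Nonempty → eq.1 = 0 ∧ eq.2 = y0) := by
    intro i
    by_cases h : (D i).Nonempty
    · obtain ⟨i', hi', hmax⟩ := Finset.exists_max_image (D i) a h
      exact ⟨(T i' + P i', b i'), fun _ => ⟨i', hi', hmax, rfl, rfl⟩,
        fun hc => absurd h hc⟩
    · exact ⟨(0, y0), fun hc => absurd hc h, fun _ => ⟨rfl, rfl⟩⟩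
  choose eq heq1 heq2 using hexist
  set e : Fin m → ℝ := fun i => (eq i).1 with he
  set q : Fin m → ℝ := fun i => (eq i).2 with hq
  -- processing times are positive
  have hPpos : ∀ i ∈ U, 0 < P i := fun i hi =>
    lt_of_lt_of_le (div_pos (sub_pos.2 (hab i hi)) humax) (hC i hi).1
  -- inner slopes
  set sl : Fin m → ℝ := fun i => (b i - a i) / P i with hsl
  have hslb : ∀ i ∈ U, umin ≤ sl i ∧ sl i ≤ umax ∧ sl i * P i = b i - a i := by
    intro i hi
    have hP := hPpos i hi
    obtain ⟨hc1, hc2⟩ := hC i hi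
    have h1' : b i - a i ≤ P i * umax := (div_le_iff₀ humax).1 hc1
    have h2' : P i * umin ≤ b i - a i := (le_div_iff₀ h0).1 hc2
    refine ⟨?_, ?_, div_mul_cancel₀ _ (ne_of_gt hP)⟩
    · rw [hsl, le_div_iff₀ hP]; nlinarith
    · rw [hsl, div_le_iff₀ hP]; nlinarith
  -- combined entry constraint
  have hTe : ∀ i ∈ U, (a i - q i) / umax ≤ T i - e i ∧ T i - e i ≤ (a i - q i) / umin := by
    intro i hi
    by_cases h : (D i).Nonempty
    · obtain ⟨i', hi'D, hmax, he', hq'⟩ := heq1 i h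
      obtain ⟨hi'U, hai'⟩ := (hmemD i i').1 hi'D
      have himm : ∀ k ∈ U, ¬ (a i' < a k ∧ a k < a i) := by
        rintro k hk ⟨hk1, hk2⟩
        exact absurd (hmax k ((hmemD i k).2 ⟨hk, hk2⟩)) (not_le.2 hk1)
      obtain ⟨hb1, hb2⟩ := hB i hi i' hi'U hai' himm
      have hee : e i = T i' + P i' := he'
      have hqq : q i = b i' := hq'
      rw [hee, hqq]
      constructor <;> linarith
    · obtain ⟨he', hq'⟩ := heq2 i h
      have hfirst : ∀ k ∈ U, a i ≤ a k := by
        intro k hk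
        by_contra hlt
        exact h ⟨k, (hmemD i k).2 ⟨hk, not_le.1 hlt⟩⟩
      obtain ⟨ha1, ha2⟩ := hA i hi hfirst
      have hee : e i = 0 := he'
      have hqq : q i = y0 := hq'
      rw [hee, hqq]
      constructor <;> linarith
  -- prev position below entry
  have hqa : ∀ i ∈ U, q i ≤ a i := by
    intro i hi
    by_cases h : (D i).Nonempty
    · obtain ⟨i', hi'D, hmax, he', hq'⟩ := heq1 i h
      obtain ⟨hi'U, hai'⟩ := (hmemD i i').1 hi'D
      have hne : i' ≠ i := fun hcon => absurd hai' (by rw [hcon]; exact lt_irrefl _)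
      have hqq : q i = b i' := hq'
      rcases hsep i' hi'U i hi hne with hcase | hcase
      · rw [hqq]; exact hcase
      · have := hab i hi; linarith
    · obtain ⟨_, hq'⟩ := heq2 i h
      have hqq : q i = y0 := hq'
      rw [hqq]; exact le_of_lt (hy0 i hi)
  have hTepos : ∀ i ∈ U, e i ≤ T i := by
    intro i hi
    have h := (hTe i hi).1
    have h2 : (0:ℝ) ≤ (a i - q i) / umax :=
      div_nonneg (by linarith [hqa i hi]) humax.le
    linarith
  -- main structural induction
  have G : ∀ N : ℕ, ∀ i ∈ U, (D i).card ≤ N →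
      0 < T i ∧ 0 ≤ e i ∧ (∀ k ∈ U, a k < a i → T k + P k ≤ e i) := by
    intro N
    induction N with
    | zero =>
      intro i hi hcard
      have hDi : D i = ∅ := Finset.card_eq_zero.1 (Nat.le_zero.1 hcard)
      obtain ⟨he', _⟩ := heq2 i (by rw [hDi]; exact Finset.not_nonempty_empty)
      have hee : e i = 0 := he'
      have h := (hTe i hi).1
      have hqq := hqa i hi
      refine ⟨?_, by rw [hee], ?_⟩
      · by_cases hQ : (D i).Nonempty
        · exact absurd hDi (Finset.nonempty_iff_ne_empty.1 hQ)
        · obtain ⟨_, hq'⟩ := heq2 i hQ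
          have : q i = y0 := hq'
          have hpos : (0:ℝ) < (a i - q i) / umax := by
            rw [this]; exact div_pos (by linarith [hy0 i hi]) humax
          rw [hee] at h; linarith
      · intro k hk hki
        exact absurd ((hmemD i k).2 ⟨hk, hki⟩) (by rw [hDi]; exact Finset.notMem_empty k)
    | succ N ih =>
      intro i hi hcard
      by_cases hne : (D i).Nonempty
      · obtain ⟨i', hi'D, hmax, he', hq'⟩ := heq1 i hne
        obtain ⟨hi'U, hai'⟩ := (hmemD i i').1 hi'D
        have hsub : D i' ⊆ D i := by
          intro l hl
          obtain ⟨hlU, hla⟩ := (hmemD i' l).1 hl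
          exact (hmemD i l).2 ⟨hlU, lt_trans hla hai'⟩
        have hlt : (D i').card < (D i).card := by
          refine Finset.card_lt_card ⟨hsub, fun hc => ?_⟩
          exact absurd ((hmemD i' i').1 (hc hi'D)).2 (lt_irrefl _)
        obtain ⟨hT', he0', hpred'⟩ := ih i' hi'U (by omega)
        have hee : e i = T i' + P i' := he'
        have hP' := hPpos i' hi'U
        have hte := hTepos i hi
        refine ⟨by linarith, by rw [hee]; linarith, ?_⟩
        intro k hk hki
        have hkle : a k ≤ a i' := hmax k ((hmemD i k).2 ⟨hk, hki⟩)
        rcases eq_or_ne k i' with rfl | hne2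
        · rw [hee]
        · have hklt : a k < a i' := lt_of_le_of_ne hkle (hane k hk i' hi'U hne2)
          have h3 := hpred' k hk hklt
          have h4 := hTepos i' hi'U
          rw [hee]; linarith
      · -- no predecessors: same as base case
        have hDi : D i = ∅ := Finset.not_nonempty_iff_eq_empty.1 hne
        obtain ⟨he', hq'⟩ := heq2 i hne
        have hee : e i = 0 := he'
        have hqq : q i = y0 := hq'
        have h := (hTe i hi).1
        refine ⟨?_, by rw [hee], ?_⟩
        · have hpos : (0:ℝ) < (a i - q i) / umax := by
            rw [hqq]; exact div_pos (by linarith [hy0 i hi]) humax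
          rw [hee] at h; linarith
        · intro k hk hki
          exact absurd ((hmemD i k).2 ⟨hk, hki⟩) (by rw [hDi]; exact Finset.notMem_empty k)
  have G' : ∀ i ∈ U, 0 < T i ∧ 0 ≤ e i ∧ (∀ k ∈ U, a k < a i → T k + P k ≤ e i) :=
    fun i hi => G (D i).card i hi le_rfl
  -- gap slopes
  set v : Fin m → ℝ := fun i => if e i < T i then (a i - q i) / (T i - e i) else umin
    with hv
  have hvb : ∀ i ∈ U, umin ≤ v i ∧ v i ≤ umax ∧ v i * (T i - e i) = a i - q i := by
    intro i hi
    obtain ⟨hlo, hhi⟩ := hTe i hi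
    by_cases h : e i < T i
    · have hd : (0:ℝ) < T i - e i := sub_pos.2 h
      have hvv : v i = (a i - q i) / (T i - e i) := by rw [hv]; simp only [if_pos h]
      have h1' : a i - q i ≤ (T i - e i) * umax := (div_le_iff₀ humax).1 hlo
      have h2' : (T i - e i) * umin ≤ a i - q i := (le_div_iff₀ h0).1 hhi
      refine ⟨?_, ?_, ?_⟩
      · rw [hvv, le_div_iff₀ hd]; nlinarith
      · rw [hvv, div_le_iff₀ hd]; nlinarith
      · rw [hvv]; exact div_mul_cancel₀ _ (ne_of_gt hd)
    · have hee : T i - e i = 0 := by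
        have := hTepos i hi; have := not_lt.1 h; linarith
      have hvv : v i = umin := by rw [hv]; simp only [if_neg h]
      have h1' : a i - q i ≤ (T i - e i) * umax := (div_le_iff₀ humax).1 hlo
      have h2' : (T i - e i) * umin ≤ a i - q i := (le_div_iff₀ h0).1 hhi
      rw [hee] at h1' h2'
      refine ⟨le_of_eq hvv.symm, by rw [hvv]; exact h1, ?_⟩
      rw [hvv, hee]; simp only [mul_zero]; linarith
  -- big-interval disjointness
  have hdisj : ∀ i ∈ U, ∀ k ∈ U, i ≠ k → T i + P i ≤ e k ∨ T k + P k ≤ e i := by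
    intro i hi k hk hik
    rcases lt_or_gt_of_ne (hane i hi k hk hik) with h | h
    · exact Or.inl ((G' k hk).2.2 i hi h)
    · exact Or.inr ((G' i hi).2.2 k hk h)
  -- the control
  set u : ℝ → ℝ := fun s => umin + ∑ k ∈ U,
      ((v k - umin) * (Set.Ioc (e k) (T k)).indicator (fun _ => (1:ℝ)) s +
       (sl k - umin) * (Set.Ioc (T k) (T k + P k)).indicator (fun _ => (1:ℝ)) s)
    with hu
  have hsummeas : ∀ k : Fin m, Measurable (fun s =>
      (v k - umin) * (Set.Ioc (e k) (T k)).indicator (fun _ => (1:ℝ)) s +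
      (sl k - umin) * (Set.Ioc (T k) (T k + P k)).indicator (fun _ => (1:ℝ)) s) :=
    fun k => (((measurable_const.indicator measurableSet_Ioc).const_mul _).add
      ((measurable_const.indicator measurableSet_Ioc).const_mul _))
  have hmeas : Measurable u := by
    rw [hu]
    exact measurable_const.add (Finset.measurable_sum U fun k _ => hsummeas k)
  have hsub1 : ∀ k ∈ U, Set.Ioc (e k) (T k) ⊆ Set.Ioc (e k) (T k + P k) :=
    fun k hk => Set.Ioc_subset_Ioc_right (by linarith [hPpos k hk])
  have hsub2 : ∀ k ∈ U, Set.Ioc (T k) (T k + P k) ⊆ Set.Ioc (e k) (T k + P k) :=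
    fun k hk => Set.Ioc_subset_Ioc_left (hTepos k hk)
  have hbound : ∀ s : ℝ, umin ≤ u s ∧ u s ≤ umax := by
    intro s
    constructor
    · have : (0:ℝ) ≤ ∑ k ∈ U,
          ((v k - umin) * (Set.Ioc (e k) (T k)).indicator (fun _ => (1:ℝ)) s +
           (sl k - umin) * (Set.Ioc (T k) (T k + P k)).indicator (fun _ => (1:ℝ)) s) := by
        refine Finset.sum_nonneg fun k hk => ?_
        have h1' := (hvb k hk).1
        have h2' := (hslb k hk).1
        have i1 := Set.indicator_nonneg (s := Set.Ioc (e k) (T k))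
          (f := fun _ : ℝ => (1:ℝ)) (fun _ _ => zero_le_one) s
        have i2 := Set.indicator_nonneg (s := Set.Ioc (T k) (T k + P k))
          (f := fun _ : ℝ => (1:ℝ)) (fun _ _ => zero_le_one) s
        have := mul_nonneg (by linarith : (0:ℝ) ≤ v k - umin) i1
        have := mul_nonneg (by linarith : (0:ℝ) ≤ sl k - umin) i2
        linarith
      simp only [hu]; linarith
    · by_cases hex : ∃ k ∈ U, s ∈ Set.Ioc (e k) (T k + P k)
      · obtain ⟨k0, hk0, hsk0⟩ := hex
        have hsum : ∑ k ∈ U,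
            ((v k - umin) * (Set.Ioc (e k) (T k)).indicator (fun _ => (1:ℝ)) s +
             (sl k - umin) * (Set.Ioc (T k) (T k + P k)).indicator (fun _ => (1:ℝ)) s)
            = (v k0 - umin) * (Set.Ioc (e k0) (T k0)).indicator (fun _ => (1:ℝ)) s +
              (sl k0 - umin) * (Set.Ioc (T k0) (T k0 + P k0)).indicator (fun _ => (1:ℝ)) s := by
          refine Finset.sum_eq_single_of_mem k0 hk0 fun k hk hkne => ?_
          have hnot : s ∉ Set.Ioc (e k) (T k + P k) := by
            intro hsk
            rcases hdisj k hk k0 hk0 hkne with hcase | hcase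
            · have := hsk.2; have := hsk0.1; linarith
            · have := hsk0.2; have := hsk.1; linarith
          rw [Set.indicator_of_notMem (fun hmem => hnot (hsub1 k hk hmem)),
            Set.indicator_of_notMem (fun hmem => hnot (hsub2 k hk hmem))]
          ring
        simp only [hu]
        rw [hsum]
        rcases le_or_gt s (T k0) with hcase | hcase
        · rw [Set.indicator_of_mem (Set.mem_Ioc.2 ⟨hsk0.1, hcase⟩),
            Set.indicator_of_notMem (fun hmem => absurd hmem.1 (not_lt.2 hcase))]
          have := (hvb k0 hk0).2.1
          linarith
        · rw [Set.indicator_of_notMem (fun hmem => absurd hcase (not_lt.2 hmem.2)),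
            Set.indicator_of_mem (Set.mem_Ioc.2 ⟨hcase, hsk0.2⟩)]
          have := (hslb k0 hk0).2.1
          linarith
      · push_neg at hex
        have hsum : ∑ k ∈ U,
            ((v k - umin) * (Set.Ioc (e k) (T k)).indicator (fun _ => (1:ℝ)) s +
             (sl k - umin) * (Set.Ioc (T k) (T k + P k)).indicator (fun _ => (1:ℝ)) s)
            = 0 := by
          refine Finset.sum_eq_zero fun k hk => ?_
          rw [Set.indicator_of_notMem (fun hmem => hex k hk (hsub1 k hk hmem)),
            Set.indicator_of_notMem (fun hmem => hex k hk (hsub2 k hk hmem))]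
          ring
        simp only [hu]
        rw [hsum]; linarith
  have he0 : ∀ k ∈ U, (0:ℝ) ≤ e k := fun k hk => (G' k hk).2.1
  have hT0 : ∀ k ∈ U, (0:ℝ) ≤ T k := fun k hk => (G' k hk).1.le
  -- the closed-form trajectory
  set Fn : ℝ → ℝ := fun t => y0 + umin * t + ∑ k ∈ U,
      ((v k - umin) * (min t (T k) - min t (e k)) +
       (sl k - umin) * (min t (T k + P k) - min t (T k))) with hFn
  have hintg : ∀ t : ℝ, ∀ k ∈ U, IntervalIntegrable (fun s =>
      (v k - umin) * (Set.Ioc (e k) (T k)).indicator (fun _ => (1:ℝ)) s +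
      (sl k - umin) * (Set.Ioc (T k) (T k + P k)).indicator (fun _ => (1:ℝ)) s)
      volume 0 t := fun t k _ =>
    ((intInt_indicator_Ioc _ _ t).const_mul _).add
      ((intInt_indicator_Ioc _ _ t).const_mul _)
  have hF : ∀ t : ℝ, y0 + ∫ s in (0:ℝ)..t, u s = Fn t := by
    intro t
    have hintsum : IntervalIntegrable (fun s => ∑ k ∈ U,
        ((v k - umin) * (Set.Ioc (e k) (T k)).indicator (fun _ => (1:ℝ)) s +
         (sl k - umin) * (Set.Ioc (T k) (T k + P k)).indicator (fun _ => (1:ℝ)) s))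
        volume 0 t := by
      have h := IntervalIntegrable.sum U (hintg t)
      have heqf : (fun s => ∑ k ∈ U,
          ((v k - umin) * (Set.Ioc (e k) (T k)).indicator (fun _ => (1:ℝ)) s +
           (sl k - umin) * (Set.Ioc (T k) (T k + P k)).indicator (fun _ => (1:ℝ)) s))
          = ∑ k ∈ U, (fun s =>
          (v k - umin) * (Set.Ioc (e k) (T k)).indicator (fun _ => (1:ℝ)) s +
          (sl k - umin) * (Set.Ioc (T k) (T k + P k)).indicator (fun _ => (1:ℝ)) s) := by
        funext s; simp [Finset.sum_apply]
      rw [heqf]; exact h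
    have hS : (∫ s in (0:ℝ)..t, ∑ k ∈ U,
        ((v k - umin) * (Set.Ioc (e k) (T k)).indicator (fun _ => (1:ℝ)) s +
         (sl k - umin) * (Set.Ioc (T k) (T k + P k)).indicator (fun _ => (1:ℝ)) s))
        = ∑ k ∈ U, ((v k - umin) * (min t (T k) - min t (e k)) +
            (sl k - umin) * (min t (T k + P k) - min t (T k))) := by
      rw [intervalIntegral.integral_finset_sum (hintg t)]
      refine Finset.sum_congr rfl fun k hk => ?_
      rw [intervalIntegral.integral_add ((intInt_indicator_Ioc _ _ t).const_mul _)
          ((intInt_indicator_Ioc _ _ t).const_mul _),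
        intervalIntegral.integral_const_mul, intervalIntegral.integral_const_mul,
        integral_indicator_Ioc (he0 k hk) (hTepos k hk) t,
        integral_indicator_Ioc (hT0 k hk) (by linarith [hPpos k hk]) t]
    simp only [hu]
    rw [intervalIntegral.integral_add (intervalIntegrable_const (c := umin))
        hintsum,
      intervalIntegral.integral_const, smul_eq_mul, hS]
    simp only [hFn]; ring
  -- monotonicity
  have hFmono : ∀ t1 t2 : ℝ, t1 ≤ t2 → Fn t1 ≤ Fn t2 := by
    intro t1 t2 h
    simp only [hFn]
    have hsum : ∑ k ∈ U, ((v k - umin) * (min t1 (T k) - min t1 (e k)) +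
        (sl k - umin) * (min t1 (T k + P k) - min t1 (T k)))
        ≤ ∑ k ∈ U, ((v k - umin) * (min t2 (T k) - min t2 (e k)) +
        (sl k - umin) * (min t2 (T k + P k) - min t2 (T k))) := by
      refine Finset.sum_le_sum fun k hk => ?_
      have m1 := min_diff_mono (hTepos k hk) h
      have m2 := min_diff_mono (show T k ≤ T k + P k by linarith [hPpos k hk]) h
      have c1 : (0:ℝ) ≤ v k - umin := by linarith [(hvb k hk).1]
      have c2 : (0:ℝ) ≤ sl k - umin := by linarith [(hslb k hk).1]
      exact add_le_add (mul_le_mul_of_nonneg_left m1 c1) (mul_le_mul_of_nonneg_left m2 c2)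
    have : umin * t1 ≤ umin * t2 := mul_le_mul_of_nonneg_left h h0.le
    linarith
  -- difference formula
  have hdiff : ∀ t1 t2 : ℝ, Fn t2 - Fn t1 = umin * (t2 - t1) + ∑ k ∈ U,
      ((v k - umin) * ((min t2 (T k) - min t2 (e k)) - (min t1 (T k) - min t1 (e k))) +
       (sl k - umin) * ((min t2 (T k + P k) - min t2 (T k)) -
         (min t1 (T k + P k) - min t1 (T k)))) := by
    intro t1 t2
    have hs : ∑ k ∈ U,
        ((v k - umin) * ((min t2 (T k) - min t2 (e k)) - (min t1 (T k) - min t1 (e k))) +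
         (sl k - umin) * ((min t2 (T k + P k) - min t2 (T k)) -
           (min t1 (T k + P k) - min t1 (T k))))
        = (∑ k ∈ U, ((v k - umin) * (min t2 (T k) - min t2 (e k)) +
            (sl k - umin) * (min t2 (T k + P k) - min t2 (T k))))
          - ∑ k ∈ U, ((v k - umin) * (min t1 (T k) - min t1 (e k)) +
            (sl k - umin) * (min t1 (T k + P k) - min t1 (T k))) := by
      rw [← Finset.sum_sub_distrib]
      exact Finset.sum_congr rfl fun k _ => by ring
    rw [hs]; simp only [hFn]; ring
  -- entry evaluation
  have hEval1 : ∀ i ∈ U, Fn (T i) = Fn (e i) + (a i - q i) := by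
    intro i hi
    have hd := hdiff (e i) (T i)
    have hte := hTepos i hi
    have hsum : ∑ k ∈ U,
        ((v k - umin) * ((min (T i) (T k) - min (T i) (e k)) -
          (min (e i) (T k) - min (e i) (e k))) +
         (sl k - umin) * ((min (T i) (T k + P k) - min (T i) (T k)) -
           (min (e i) (T k + P k) - min (e i) (T k))))
        = (v i - umin) * (T i - e i) := by
      have hmain : (v i - umin) * ((min (T i) (T i) - min (T i) (e i)) -
            (min (e i) (T i) - min (e i) (e i))) +
          (sl i - umin) * ((min (T i) (T i + P i) - min (T i) (T i)) -
            (min (e i) (T i + P i) - min (e i) (T i)))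
          = (v i - umin) * (T i - e i) := by
        rw [min_self, min_self, min_eq_right hte, min_eq_left hte,
          min_eq_left (by linarith [hPpos i hi] : T i ≤ T i + P i),
          min_eq_left (by linarith [hPpos i hi] : e i ≤ T i + P i)]
        ring
      rw [Finset.sum_eq_single_of_mem i hi fun k hk hkne => ?_, hmain]
      rcases lt_or_gt_of_ne (hane k hk i hi hkne) with hlt | hlt
      · have h5 : T k + P k ≤ e i := (G' i hi).2.2 k hk hlt
        have hp := hPpos k hk
        rw [min_diff_zero (hTepos k hk) (Or.inl ⟨by linarith, hte⟩),
          min_diff_zero (by linarith [hPpos k hk] : T k ≤ T k + P k)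
            (Or.inl ⟨by linarith, hte⟩)]
        ring
      · have h5 : T i + P i ≤ e k := (G' k hk).2.2 i hi hlt
        have hp := hPpos i hi
        have hek := hTepos k hk
        rw [min_diff_zero (hTepos k hk) (Or.inr ⟨by linarith, hte⟩),
          min_diff_zero (by linarith [hPpos k hk] : T k ≤ T k + P k)
            (Or.inr ⟨by linarith, hte⟩)]
        ring
    rw [hsum] at hd
    have hveq := (hvb i hi).2.2
    linear_combination hd + hveq
  -- exit evaluation
  have hEval2 : ∀ i ∈ U, Fn (T i + P i) = Fn (T i) + (b i - a i) := by
    intro i hi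
    have hd := hdiff (T i) (T i + P i)
    have hte := hTepos i hi
    have hp := hPpos i hi
    have hsum : ∑ k ∈ U,
        ((v k - umin) * ((min (T i + P i) (T k) - min (T i + P i) (e k)) -
          (min (T i) (T k) - min (T i) (e k))) +
         (sl k - umin) * ((min (T i + P i) (T k + P k) - min (T i + P i) (T k)) -
           (min (T i) (T k + P k) - min (T i) (T k))))
        = (sl i - umin) * (P i) := by
      have hmain : (v i - umin) * ((min (T i + P i) (T i) - min (T i + P i) (e i)) -
            (min (T i) (T i) - min (T i) (e i))) +
          (sl i - umin) * ((min (T i + P i) (T i + P i) - min (T i + P i) (T i)) -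
            (min (T i) (T i + P i) - min (T i) (T i)))
          = (sl i - umin) * (P i) := by
        rw [min_self, min_self,
          min_eq_right (by linarith : T i ≤ T i + P i),
          min_eq_right (by linarith : e i ≤ T i + P i),
          min_eq_right hte,
          min_eq_left (by linarith : T i ≤ T i + P i)]
        ring
      rw [Finset.sum_eq_single_of_mem i hi fun k hk hkne => ?_, hmain]
      rcases lt_or_gt_of_ne (hane k hk i hi hkne) with hlt | hlt
      · have h5 : T k + P k ≤ e i := (G' i hi).2.2 k hk hlt
        have hpk := hPpos k hk
        rw [min_diff_zero (hTepos k hk) (Or.inl ⟨by linarith, by linarith⟩),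
          min_diff_zero (by linarith : T k ≤ T k + P k)
            (Or.inl ⟨by linarith, by linarith⟩)]
        ring
      · have h5 : T i + P i ≤ e k := (G' k hk).2.2 i hi hlt
        have hek := hTepos k hk
        have hpk := hPpos k hk
        rw [min_diff_zero (hTepos k hk) (Or.inr ⟨by linarith, by linarith⟩),
          min_diff_zero (by linarith : T k ≤ T k + P k)
            (Or.inr ⟨by linarith, by linarith⟩)]
        ring
    rw [hsum] at hd
    have hsleq := (hslb i hi).2.2
    linear_combination hd + hsleq
  have hFn0 : Fn 0 = y0 := by
    simp only [hFn]
    have hsum : ∑ k ∈ U, ((v k - umin) * (min 0 (T k) - min 0 (e k)) +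
        (sl k - umin) * (min 0 (T k + P k) - min 0 (T k))) = 0 := by
      refine Finset.sum_eq_zero fun k hk => ?_
      rw [min_eq_left (hT0 k hk), min_eq_left (he0 k hk),
        min_eq_left (by linarith [hT0 k hk, hPpos k hk] : (0:ℝ) ≤ T k + P k)]
      ring
    rw [hsum]; ring
  -- key values by structural induction
  have hstep : ∀ i ∈ U, Fn (e i) = q i → (Fn (T i) = a i ∧ Fn (T i + P i) = b i) := by
    intro i hi hq0
    have h1' : Fn (T i) = a i := by rw [hEval1 i hi, hq0]; ring
    exact ⟨h1', by rw [hEval2 i hi, h1']; ring⟩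
  have hempty : ∀ i : Fin m, ¬ (D i).Nonempty → Fn (e i) = q i := by
    intro i h
    obtain ⟨he', hq'⟩ := heq2 i h
    have hee : e i = 0 := he'
    have hqq : q i = y0 := hq'
    rw [hee, hqq, hFn0]
  have hKV : ∀ N : ℕ, ∀ i ∈ U, (D i).card ≤ N →
      Fn (T i) = a i ∧ Fn (T i + P i) = b i := by
    intro N
    induction N with
    | zero =>
      intro i hi hcard
      have hDi : D i = ∅ := Finset.card_eq_zero.1 (Nat.le_zero.1 hcard)
      exact hstep i hi (hempty i (by rw [hDi]; exact Finset.not_nonempty_empty))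
    | succ N ih =>
      intro i hi hcard
      by_cases hne : (D i).Nonempty
      · obtain ⟨i', hi'D, hmax, he', hq'⟩ := heq1 i hne
        obtain ⟨hi'U, hai'⟩ := (hmemD i i').1 hi'D
        have hsub : D i' ⊆ D i := by
          intro l hl
          obtain ⟨hlU, hla⟩ := (hmemD i' l).1 hl
          exact (hmemD i l).2 ⟨hlU, lt_trans hla hai'⟩
        have hlt : (D i').card < (D i).card := by
          refine Finset.card_lt_card ⟨hsub, fun hc => ?_⟩
          exact absurd ((hmemD i' i').1 (hc hi'D)).2 (lt_irrefl _)
        have hIH := ih i' hi'U (by omega)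
        have hee : e i = T i' + P i' := he'
        have hqq : q i = b i' := hq'
        exact hstep i hi (by rw [hee, hqq]; exact hIH.2)
      · exact hstep i hi (hempty i hne)
  refine ⟨u, ⟨hmeas, fun s _ => hbound s⟩, ?_, ?_⟩
  · intro t1 t2 h
    rw [hF t1, hF t2]
    exact hFmono t1 t2 h
  · intro i hi
    rw [hF (T i), hF (T i + P i)]
    exact hKV (D i).card i hi le_rfl

end VerifMilp

/-- Equivalence of the safety verification problem and the mixed-integer
feasibility problem for single-integrator dynamics.  Vehicles `j : Fin n` cross
conflict areas `i : Fin m` (as recorded by `Use`); `α i j` and `β i j` are the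
entry and exit positions of area `i` on vehicle `j`'s path.  Safety for all
future time with admissible controls is equivalent to feasibility of the
job-shop scheduling constraints (A)–(D), where `T i j` is the time vehicle `j`
enters area `i` and `p i j` the time spent inside. -/
theorem verification_iff_milp (n m : ℕ)
    (Use : Fin m → Fin n → Prop)
    (α β : Fin m → Fin n → ℝ)
    (umin umax y0 : Fin n → ℝ)
    (hb : ∀ j : Fin n, 0 < umin j ∧ umin j ≤ umax j)
    (hαβ : ∀ i j, Use i j → α i j < β i j)
    (hy0 : ∀ i j, Use i j → y0 j < α i j)
    (hsep : ∀ j, ∀ i i' : Fin m, Use i j → Use i' j → i ≠ i' →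
      β i j ≤ α i' j ∨ β i' j ≤ α i j) :
    (∃ u : Fin n → ℝ → ℝ,
      (∀ j, Admissible (umin j) (umax j) (u j)) ∧
        ∀ t : ℝ, 0 ≤ t → ∀ i : Fin m, ∀ j j' : Fin n, j ≠ j' →
          Use i j → Use i j' →
            ¬ ((α i j < y0 j + ∫ s in (0:ℝ)..t, u j s ∧
                  y0 j + ∫ s in (0:ℝ)..t, u j s < β i j) ∧
               (α i j' < y0 j' + ∫ s in (0:ℝ)..t, u j' s ∧
                  y0 j' + ∫ s in (0:ℝ)..t, u j' s < β i j'))) ↔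
    (∃ T p : Fin m → Fin n → ℝ,
      -- (A) first conflict area on j's route
      (∀ i j, Use i j → (∀ i'' : Fin m, Use i'' j → α i j ≤ α i'' j) →
        (α i j - y0 j) / umax j ≤ T i j ∧ T i j ≤ (α i j - y0 j) / umin j) ∧
      -- (B) immediate predecessor constraint
      (∀ i i' j, Use i j → Use i' j → α i' j < α i j →
        (∀ i'' : Fin m, Use i'' j → ¬ (α i' j < α i'' j ∧ α i'' j < α i j)) →
        T i' j + p i' j + (α i j - β i' j) / umax j ≤ T i j ∧
          T i j ≤ T i' j + p i' j + (α i j - β i' j) / umin j) ∧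
      -- (C) process-time bounds
      (∀ i j, Use i j →
        (β i j - α i j) / umax j ≤ p i j ∧ p i j ≤ (β i j - α i j) / umin j) ∧
      -- (D) disjunctive (collision avoidance) constraint
      (∀ i : Fin m, ∀ j j' : Fin n, j ≠ j' → Use i j → Use i j' →
        T i j + p i j ≤ T i j' ∨ T i j' + p i j' ≤ T i j)) := by
  classical
  have hum : ∀ j, (0:ℝ) < umax j := fun j => lt_of_lt_of_le (hb j).1 (hb j).2
  constructor
  · rintro ⟨u, hadm, hsafe⟩
    set Y : Fin n → ℝ → ℝ := fun j t => y0 j + ∫ s in (0:ℝ)..t, u j s with hYdef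
    have hkeyY : ∀ (j : Fin n) (s t : ℝ), 0 ≤ s → s ≤ t →
        umin j * (t - s) ≤ Y j t - Y j s ∧ Y j t - Y j s ≤ umax j * (t - s) :=
      fun j s t hs hst => VerifMilp.traj_bounds (hadm j) (y0 j) hs hst
    have hY0 : ∀ j, Y j 0 = y0 j := by
      intro j; simp [hYdef]
    have hmono : ∀ (j : Fin n) (s t : ℝ), 0 ≤ s → s < t → Y j s < Y j t := by
      intro j s t hs hst
      have h := (hkeyY j s t hs hst.le).1
      have h2 : 0 < umin j * (t - s) := mul_pos (hb j).1 (by linarith)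
      linarith
    have hhit : ∀ i j, Use i j →
        ∃ tA tB : ℝ, (0 ≤ tA ∧ Y j tA = α i j) ∧ (0 ≤ tB ∧ Y j tB = β i j) := by
      intro i j hij
      obtain ⟨tA, h1, h2⟩ := VerifMilp.exists_hit (hadm j) (hb j).1 (hy0 i j hij)
      obtain ⟨tB, h3, h4⟩ := VerifMilp.exists_hit (hadm j) (hb j).1
        (lt_trans (hy0 i j hij) (hαβ i j hij))
      exact ⟨tA, tB, ⟨h1, h2⟩, ⟨h3, h4⟩⟩
    choose tA tB hta htb using hhit
    refine ⟨fun i j => if h : Use i j then tA i j h else 0,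
            fun i j => if h : Use i j then tB i j h - tA i j h else 0, ?_, ?_, ?_, ?_⟩
    · -- (A)
      intro i j h _
      simp only [dif_pos h]
      obtain ⟨h0A, hvA⟩ := hta i j h
      have hk := hkeyY j 0 (tA i j h) le_rfl h0A
      rw [hvA, hY0 j] at hk
      constructor
      · rw [div_le_iff₀ (hum j)]; nlinarith [hk.2]
      · rw [le_div_iff₀ (hb j).1]; nlinarith [hk.1]
    · -- (B)
      intro i i' j h h' hlt _
      simp only [dif_pos h, dif_pos h']
      have hne : i ≠ i' := fun hcon => by rw [hcon] at hlt; exact lt_irrefl _ hlt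
      have hba : β i' j ≤ α i j := by
        rcases hsep j i i' h h' hne with hc | hc
        · exfalso; have := hαβ i j h; linarith
        · exact hc
      obtain ⟨h0A, hvA⟩ := hta i j h
      obtain ⟨h0B', hvB'⟩ := htb i' j h'
      have horder : tB i' j h' ≤ tA i j h := by
        by_contra hc
        push_neg at hc
        have := hmono j (tA i j h) (tB i' j h') h0A hc
        rw [hvA, hvB'] at this
        linarith
      have hk := hkeyY j (tB i' j h') (tA i j h) h0B' horder
      rw [hvA, hvB'] at hk
      constructor
      · have hd : (α i j - β i' j) / umax j ≤ tA i j h - tB i' j h' := by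
          rw [div_le_iff₀ (hum j)]; nlinarith [hk.2]
        linarith
      · have hd : tA i j h - tB i' j h' ≤ (α i j - β i' j) / umin j := by
          rw [le_div_iff₀ (hb j).1]; nlinarith [hk.1]
        linarith
    · -- (C)
      intro i j h
      simp only [dif_pos h]
      obtain ⟨h0A, hvA⟩ := hta i j h
      obtain ⟨h0B, hvB⟩ := htb i j h
      have horder : tA i j h ≤ tB i j h := by
        by_contra hc
        push_neg at hc
        have := hmono j (tB i j h) (tA i j h) h0B hc
        rw [hvA, hvB] at this
        have := hαβ i j h
        linarith
      have hk := hkeyY j (tA i j h) (tB i j h) h0A horder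
      rw [hvA, hvB] at hk
      constructor
      · rw [div_le_iff₀ (hum j)]; nlinarith [hk.2]
      · rw [le_div_iff₀ (hb j).1]; nlinarith [hk.1]
    · -- (D)
      intro i j j' hjj' h h'
      simp only [dif_pos h, dif_pos h']
      by_contra hc
      push_neg at hc
      obtain ⟨hc1, hc2⟩ := hc
      obtain ⟨h0A, hvA⟩ := hta i j h
      obtain ⟨h0B, hvB⟩ := htb i j h
      obtain ⟨h0A', hvA'⟩ := hta i j' h'
      obtain ⟨h0B', hvB'⟩ := htb i j' h'
      have hAB : tA i j h < tB i j h := by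
        by_contra hcc
        push_neg at hcc
        rcases eq_or_lt_of_le hcc with hcc' | hcc'
        · rw [hcc'] at hvB; rw [hvA] at hvB; have := hαβ i j h; linarith
        · have := hmono j (tB i j h) (tA i j h) h0B hcc'
          rw [hvA, hvB] at this; have := hαβ i j h; linarith
      have hAB' : tA i j' h' < tB i j' h' := by
        by_contra hcc
        push_neg at hcc
        rcases eq_or_lt_of_le hcc with hcc' | hcc'
        · rw [hcc'] at hvB'; rw [hvA'] at hvB'; have := hαβ i j' h'; linarith
        · have := hmono j' (tB i j' h') (tA i j' h') h0B' hcc'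
          rw [hvA', hvB'] at this; have := hαβ i j' h'; linarith
      have hc1' : tA i j' h' < tB i j h := by linarith
      have hc2' : tA i j h < tB i j' h' := by linarith
      set t0 : ℝ := (max (tA i j h) (tA i j' h') + min (tB i j h) (tB i j' h')) / 2
        with ht0
      have hmaxmin : max (tA i j h) (tA i j' h') < min (tB i j h) (tB i j' h') := by
        rw [max_lt_iff, lt_min_iff, lt_min_iff]
        exact ⟨⟨hAB, hc2'⟩, hc1', hAB'⟩
      have ht0l : max (tA i j h) (tA i j' h') < t0 := by rw [ht0]; linarith
      have ht0r : t0 < min (tB i j h) (tB i j' h') := by rw [ht0]; linarith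
      have ht00 : 0 ≤ t0 := le_trans h0A (le_trans (le_max_left _ _) ht0l.le)
      have hx1 : α i j < Y j t0 := by
        rw [← hvA]
        exact hmono j _ _ h0A (lt_of_le_of_lt (le_max_left _ _) ht0l)
      have hx2 : Y j t0 < β i j := by
        rw [← hvB]
        exact hmono j _ _ ht00 (lt_of_lt_of_le ht0r (min_le_left _ _))
      have hx3 : α i j' < Y j' t0 := by
        rw [← hvA']
        exact hmono j' _ _ h0A' (lt_of_le_of_lt (le_max_right _ _) ht0l)
      have hx4 : Y j' t0 < β i j' := by
        rw [← hvB']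
        exact hmono j' _ _ ht00 (lt_of_lt_of_le ht0r (min_le_right _ _))
      exact hsafe t0 ht00 i j j' hjj' h h' ⟨⟨hx1, hx2⟩, hx3, hx4⟩
  · rintro ⟨T, p, hA, hB, hC, hD⟩
    have hctrl : ∀ j : Fin n, ∃ u : ℝ → ℝ, Admissible (umin j) (umax j) u ∧
        (∀ t1 t2 : ℝ, t1 ≤ t2 →
          y0 j + ∫ s in (0:ℝ)..t1, u s ≤ y0 j + ∫ s in (0:ℝ)..t2, u s) ∧
        ∀ i ∈ Finset.univ.filter (fun i => Use i j),
          (y0 j + ∫ s in (0:ℝ)..(T i j), u s) = α i j ∧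
          (y0 j + ∫ s in (0:ℝ)..(T i j + p i j), u s) = β i j := by
      intro j
      have hmem : ∀ i : Fin m, i ∈ Finset.univ.filter (fun i => Use i j) ↔ Use i j := by
        intro i; simp [Finset.mem_filter]
      refine VerifMilp.exists_control (Finset.univ.filter (fun i => Use i j))
        (fun i => α i j) (fun i => β i j) (fun i => T i j) (fun i => p i j) (y0 j)
        (hb j).1 (hb j).2 ?_ ?_ ?_ ?_ ?_ ?_
      · intro i hi; exact hαβ i j ((hmem i).1 hi)
      · intro i hi; exact hy0 i j ((hmem i).1 hi)
      · intro i hi k hk hik; exact hsep j i k ((hmem i).1 hi) ((hmem k).1 hk) hik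
      · intro i hi hfirst
        exact hA i j ((hmem i).1 hi) fun i'' h'' => hfirst i'' ((hmem i'').2 h'')
      · intro i hi i' hi' hlt himm
        exact hB i i' j ((hmem i).1 hi) ((hmem i').1 hi') hlt
          fun i'' h'' => himm i'' ((hmem i'').2 h'')
      · intro i hi; exact hC i j ((hmem i).1 hi)
    choose u hadm hmono hkv using hctrl
    refine ⟨u, hadm, ?_⟩
    intro t ht i j j' hjj' hUj hUj'
    rintro ⟨⟨h1, h2⟩, h3, h4⟩
    have hmj : i ∈ Finset.univ.filter (fun i => Use i j) := by
      simp [Finset.mem_filter, hUj]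
    have hmj' : i ∈ Finset.univ.filter (fun i => Use i j') := by
      simp [Finset.mem_filter, hUj']
    obtain ⟨hTa, hTb⟩ := hkv j i hmj
    obtain ⟨hTa', hTb'⟩ := hkv j' i hmj'
    have ht1 : T i j < t := by
      by_contra hcon
      push_neg at hcon
      have := hmono j t (T i j) hcon
      rw [hTa] at this
      linarith
    have ht2 : t < T i j + p i j := by
      by_contra hcon
      push_neg at hcon
      have := hmono j (T i j + p i j) t hcon
      rw [hTb] at this
      linarith
    have ht3 : T i j' < t := by
      by_contra hcon
      push_neg at hcon
      have := hmono j' t (T i j') hcon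
      rw [hTa'] at this
      linarith
    have ht4 : t < T i j' + p i j' := by
      by_contra hcon
      push_neg at hcon
      have := hmono j' (T i j' + p i j') t hcon
      rw [hTb'] at this
      linarith
    rcases hD i j j' hjj' hUj hUj' with hc | hc <;> linarith
end
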